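/- For all real f < 0, |2(f − 1)| / ((1 − 2f)^{1/2} · (2f² − 5f + 2)) < 1. -/
import Mathlib

theorem stmt_2 : ∀ f : ℝ, f < 0 →
    |2 * (f - 1)| / (Real.sqrt (1 - 2 * f) * (2 * f ^ 2 - 5 * f + 2)) < 1 := by
  intro f hf
  have hQ : 0 < 2 * f ^ 2 - 5 * f + 2 := by nlinarith
  have hs : 1 < Real.sqrt (1 - 2 * f) := by
    have := (Real.lt_sqrt (by norm_num : (0:ℝ) ≤ 1)).mpr (by nlinarith : (1:ℝ) ^ 2 < 1 - 2 * f)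
    simpa using this
  have hden : 0 < Real.sqrt (1 - 2 * f) * (2 * f ^ 2 - 5 * f + 2) := by positivity
  rw [div_lt_one hden, abs_of_nonpos (by linarith)]
  nlinarith [mul_lt_mul_of_pos_right hs hQ]
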